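/- Equality in Jensen's inequality for the strictly convex function φ(x) = x log x: if ∫ q φ(p/q) dμ = 0 where q dμ is a probability measure and ∫ p dμ = 1 with p ≥ 0 absolutely continuous with respect to q, then p = q μ-almost everywhere. Consequently the Gibbs density is the unique minimizer of the free energy functional. -/
import Mathlib


open MeasureTheory

lemma key_ineq (a b : ℝ) (hb : 0 < b) (ha : 0 ≤ a) :
    a - b ≤ b * (a / b * Real.log (a / b)) := by
  rcases ha.lt_or_eq with ha' | ha'
  · have htpos : 0 < a / b := div_pos ha' hb
    have hlog : Real.log (1 / (a / b)) ≤ 1 / (a / b) - 1 :=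
      Real.log_le_sub_one_of_pos (by positivity)
    rw [Real.log_div one_ne_zero (ne_of_gt htpos), Real.log_one] at hlog
    have hmul : (a / b) * (1 / (a / b)) = 1 := by field_simp
    have hab : (a / b) * b = a := div_mul_cancel₀ a (ne_of_gt hb)
    have h1 : (a / b) - 1 ≤ (a / b) * Real.log (a / b) := by
      nlinarith [mul_le_mul_of_nonneg_left hlog (le_of_lt htpos)]
    nlinarith [mul_le_mul_of_nonneg_left h1 (le_of_lt hb)]
  · rw [← ha']
    simp
    positivity

lemma key_eq (a b : ℝ) (hb : 0 < b) (ha : 0 ≤ a)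
    (h : b * (a / b * Real.log (a / b)) = a - b) : a = b := by
  rcases ha.lt_or_eq with ha' | ha'
  · by_contra hne
    have htpos : 0 < a / b := div_pos ha' hb
    have ht1 : a / b ≠ 1 := by
      intro h1
      exact hne ((div_eq_one_iff_eq (ne_of_gt hb)).mp h1)
    have hlog : Real.log (1 / (a / b)) < 1 / (a / b) - 1 :=
      Real.log_lt_sub_one_of_pos (by positivity) (by
        intro hc
        apply ht1
        field_simp at hc
        rw [hc]
        exact div_self (ne_of_gt ha'))
    rw [Real.log_div one_ne_zero (ne_of_gt htpos), Real.log_one] at hlog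
    have hmul : (a / b) * (1 / (a / b)) = 1 := by field_simp
    have hab : (a / b) * b = a := div_mul_cancel₀ a (ne_of_gt hb)
    have h1 : (a / b) - 1 < (a / b) * Real.log (a / b) := by
      nlinarith [mul_lt_mul_of_pos_left hlog htpos]
    nlinarith [mul_lt_mul_of_pos_left h1 hb]
  · rw [← ha'] at h
    simp at h
    linarith

/-- Equality in Jensen's inequality for the strictly convex `φ(x) = x log x`:
if `q > 0` a.e. with `∫ q dμ = 1`, `p ≥ 0` with `∫ p dμ = 1`, and the relative entropy
`∫ q φ(p/q) dμ` vanishes, then `p = q` μ-a.e. (hence the Gibbs density is the unique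
minimizer of the free energy). -/
theorem jensen_equality_x_log_x {X : Type*} [MeasurableSpace X]
    (μ : Measure X) [IsProbabilityMeasure μ]
    (p q : X → ℝ) (hpm : Measurable p) (hqm : Measurable q)
    (hq0 : ∀ᵐ x ∂μ, 0 < q x) (hq1 : ∫ x, q x ∂μ = 1)
    (hp0 : ∀ x, 0 ≤ p x) (hp1 : ∫ x, p x ∂μ = 1)
    (hInt : Integrable (fun x => q x * ((p x / q x) * Real.log (p x / q x))) μ)
    (h0 : ∫ x, q x * ((p x / q x) * Real.log (p x / q x)) ∂μ = 0) :
    p =ᵐ[μ] q := by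
  have hq_int : Integrable q μ := by
    by_contra h
    rw [integral_undef h] at hq1
    norm_num at hq1
  have hp_int : Integrable p μ := by
    by_contra h
    rw [integral_undef h] at hp1
    norm_num at hp1
  set g : X → ℝ := fun x =>
    q x * ((p x / q x) * Real.log (p x / q x)) - (p x - q x) with hg
  have hpq_int : Integrable (fun x => p x - q x) μ := hp_int.sub hq_int
  have hg_int : Integrable g μ := hInt.sub hpq_int
  have hg_nonneg : 0 ≤ᵐ[μ] g := by
    filter_upwards [hq0] with x hx
    have := key_ineq (p x) (q x) hx (hp0 x)
    simp only [hg, Pi.zero_apply]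
    linarith
  have hg_integral : ∫ x, g x ∂μ = 0 := by
    simp only [hg]
    rw [integral_sub hInt hpq_int, integral_sub hp_int hq_int,
      h0, hp1, hq1]
    ring
  have hg0 : g =ᵐ[μ] 0 :=
    (integral_eq_zero_iff_of_nonneg_ae hg_nonneg hg_int).mp hg_integral
  filter_upwards [hq0, hg0] with x hx hgx
  simp only [hg, Pi.zero_apply] at hgx
  exact key_eq (p x) (q x) hx (hp0 x) (by linarith)
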